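/- Let T be a division ring, a ∈ GL(n,T) with all diagonal entries nonzero, and ρ a permutation with a_{i,ρ(i)} ≠ 0 for all i. Then for a suitable choice of invertible diagonal matrix d, the matrix b = a·d·a satisfies b_{i,ρ²(i)} ≠ 0 for all i. -/

import Mathlib

open Finset

private def FmAux {n : ℕ} {T : Type*} [DivisionRing T]
    (a : Matrix (Fin n) (Fin n) T) (σ : Fin n → Fin n) (t : Fin n → T) (j : Fin n) : T :=
  ∑ k, a j k * t k * a k (σ j)

private lemma fmAux_step {n : ℕ} {T : Type*} [DivisionRing T] [Infinite T]
    (a : Matrix (Fin n) (Fin n) T) (σ : Fin n → Fin n) (p i : Fin n)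
    (hα : a i p ≠ 0) (hβ : a p (σ i) ≠ 0) (t : Fin n → T) (ht : ∀ k, t k ≠ 0) :
    ∃ t' : Fin n → T, (∀ k, t' k ≠ 0) ∧
      ∀ j, FmAux a σ t' j = 0 → FmAux a σ t j = 0 ∧ j ≠ i := by
  classical
  set g : Fin n → T := fun j =>
    -( (a j p)⁻¹ * (FmAux a σ t j - a j p * t p * a p (σ j)) * (a p (σ j))⁻¹ ) with hg
  obtain ⟨v, hv⟩ := Infinite.exists_notMem_finset (insert (0 : T) (Finset.image g univ))
  have hv0 : v ≠ 0 := fun h => hv (by simp [h])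
  have hvg : ∀ j, v ≠ g j := by
    intro j h
    exact hv (Finset.mem_insert_of_mem (h ▸ Finset.mem_image_of_mem g (mem_univ j)))
  refine ⟨Function.update t p v, ?_, ?_⟩
  · intro k
    rcases eq_or_ne k p with rfl | hk
    · simpa using hv0
    · simpa [Function.update_of_ne hk] using ht k
  · have key : ∀ j, FmAux a σ (Function.update t p v) j
        = FmAux a σ t j + a j p * (v - t p) * a p (σ j) := by
      intro j
      have hterm : ∀ k ∈ (univ : Finset (Fin n)),
          a j k * (Function.update t p v k) * a k (σ j)
            = a j k * t k * a k (σ j)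
              + (if k = p then a j p * (v - t p) * a p (σ j) else 0) := by
        intro k _
        rcases eq_or_ne k p with rfl | hk
        · rw [Function.update_self, if_pos rfl]
          noncomm_ring
        · rw [Function.update_of_ne hk, if_neg hk, add_zero]
      calc FmAux a σ (Function.update t p v) j
          = ∑ k, (a j k * t k * a k (σ j)
              + (if k = p then a j p * (v - t p) * a p (σ j) else 0)) :=
            Finset.sum_congr rfl hterm
        _ = FmAux a σ t j + ∑ k, (if k = p then a j p * (v - t p) * a p (σ j) else 0) := by
            rw [Finset.sum_add_distrib]; rfl
        _ = FmAux a σ t j + a j p * (v - t p) * a p (σ j) := by simp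
    intro j h0
    by_cases hc : a j p = 0 ∨ a p (σ j) = 0
    · have hzero : a j p * (v - t p) * a p (σ j) = 0 := by
        rcases hc with h | h <;> simp [h]
      constructor
      · rw [key j, hzero, add_zero] at h0; exact h0
      · rintro rfl
        rcases hc with h | h
        · exact hα h
        · exact hβ h
    · push_neg at hc
      obtain ⟨hc1, hc2⟩ := hc
      exfalso
      apply hvg j
      set α := a j p
      set β := a p (σ j)
      set c := FmAux a σ t j - α * t p * β with hcdef
      have h1 : α * v * β = -c := by
        have h2 := key j
        rw [h0] at h2
        have h3 : α * (v - t p) * β = α * v * β - α * t p * β := by noncomm_ring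
        rw [h3] at h2
        have h4 : FmAux a σ t j + (α * v * β - α * t p * β)
            = α * v * β + c := by rw [hcdef]; noncomm_ring
        rw [h4] at h2
        exact eq_neg_of_add_eq_zero_left h2.symm
      have h5 : α⁻¹ * (α * v * β) * β⁻¹ = v := by
        rw [← mul_assoc, ← mul_assoc, inv_mul_cancel₀ hc1, one_mul, mul_assoc,
          mul_inv_cancel₀ hc2, mul_one]
      rw [h1] at h5
      rw [← h5, hg]
      simp [mul_neg, neg_mul]
      rfl
  
private lemma fmAux_exists {n : ℕ} {T : Type*} [DivisionRing T] [Infinite T]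
    (a : Matrix (Fin n) (Fin n) T) (ρ : Equiv.Perm (Fin n))
    (hρ : ∀ i, a i (ρ i) ≠ 0) :
    ∃ t : Fin n → T, (∀ k, t k ≠ 0) ∧ ∀ j, FmAux a (fun j => ρ (ρ j)) t j ≠ 0 := by
  classical
  set σ : Fin n → Fin n := fun j => ρ (ρ j) with hσ
  suffices h : ∀ m : ℕ, ∀ t : Fin n → T, (∀ k, t k ≠ 0) →
      (univ.filter fun j => FmAux a σ t j = 0).card ≤ m →
      ∃ t' : Fin n → T, (∀ k, t' k ≠ 0) ∧ ∀ j, FmAux a σ t' j ≠ 0 by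
    exact h _ (fun _ => 1) (fun _ => one_ne_zero) le_rfl
  intro m
  induction m with
  | zero =>
    intro t ht hcard
    refine ⟨t, ht, fun j h0 => ?_⟩
    have : j ∈ univ.filter fun j => FmAux a σ t j = 0 :=
      Finset.mem_filter.2 ⟨mem_univ _, h0⟩
    have := Finset.card_eq_zero.mp (Nat.le_zero.mp hcard)
    simp [this] at *
  | succ m ih =>
    intro t ht hcard
    by_cases hz : ∀ j, FmAux a σ t j ≠ 0
    · exact ⟨t, ht, hz⟩
    push_neg at hz
    obtain ⟨i, hi⟩ := hz
    obtain ⟨t', ht', hmain⟩ := fmAux_step a σ (ρ i) i (hρ i) (hρ (ρ i)) t ht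
    apply ih t' ht'
    have hsub : (univ.filter fun j => FmAux a σ t' j = 0)
        ⊆ (univ.filter fun j => FmAux a σ t j = 0).erase i := by
      intro j hj
      obtain ⟨h1, h2⟩ := hmain j (Finset.mem_filter.mp hj).2
      exact Finset.mem_erase.2 ⟨h2, Finset.mem_filter.2 ⟨mem_univ _, h1⟩⟩
    have hmem : i ∈ univ.filter fun j => FmAux a σ t j = 0 :=
      Finset.mem_filter.2 ⟨mem_univ _, hi⟩
    calc (univ.filter fun j => FmAux a σ t' j = 0).card
        ≤ ((univ.filter fun j => FmAux a σ t j = 0).erase i).card :=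
          Finset.card_le_card hsub
      _ = (univ.filter fun j => FmAux a σ t j = 0).card - 1 :=
          Finset.card_erase_of_mem hmem
      _ ≤ m := by omega

theorem exists_diag_perm_square_entries_ne_zero
    {n : ℕ} {T : Type*} [DivisionRing T] [Infinite T] (hn : 2 ≤ n)
    (a : (Matrix (Fin n) (Fin n) T)ˣ) (hdiag : ∀ i, a.val i i ≠ 0)
    (ρ : Equiv.Perm (Fin n)) (hρ : ∀ i, a.val i (ρ i) ≠ 0) :
    ∃ d : (Matrix (Fin n) (Fin n) T)ˣ, (d.val).IsDiag ∧
      ∀ i, (a * d * a).val i (ρ (ρ i)) ≠ 0 := by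
  obtain ⟨t, ht, hgood⟩ := fmAux_exists a.val ρ hρ
  have hval : Matrix.diagonal t * Matrix.diagonal (fun k => (t k)⁻¹) = 1 := by
    rw [Matrix.diagonal_mul_diagonal]
    have h : (fun k => t k * (t k)⁻¹) = fun _ => (1 : T) :=
      funext fun k => mul_inv_cancel₀ (ht k)
    rw [h, Matrix.diagonal_one]
  have hinv : Matrix.diagonal (fun k => (t k)⁻¹) * Matrix.diagonal t = 1 := by
    rw [Matrix.diagonal_mul_diagonal]
    have h : (fun k => (t k)⁻¹ * t k) = fun _ => (1 : T) :=
      funext fun k => inv_mul_cancel₀ (ht k)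
    rw [h, Matrix.diagonal_one]
  refine ⟨⟨Matrix.diagonal t, Matrix.diagonal (fun k => (t k)⁻¹), hval, hinv⟩,
    Matrix.isDiag_diagonal t, fun i => ?_⟩
  have hentry : (a * ⟨Matrix.diagonal t, _, hval, hinv⟩ * a).val i (ρ (ρ i))
      = FmAux a.val (fun j => ρ (ρ j)) t i := by
    show (a.val * Matrix.diagonal t * a.val) i (ρ (ρ i)) = _
    rw [Matrix.mul_apply]
    simp only [Matrix.mul_diagonal]
    rfl
  rw [hentry]
  exact hgood i
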